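/- Let A be a real N×n matrix, y ∈ ℝᴺ and 0 < λ < λ_max := max_{1 ≤ j ≤ n} |aⱼᵀ y| (where aⱼ is the j-th column of A). Then every minimizer x̂ ∈ ℝⁿ of the function f(x) = ½‖y − A x‖₂² + λ‖x‖₁ is nonzero. -/

import Mathlib

open Matrix BigOperators

/-- The LASSO / Basis Pursuit Denoising objective
`f(x) = ½‖y − A x‖₂² + λ‖x‖₁`. -/
noncomputable def lassoObj {N n : ℕ} (A : Matrix (Fin N) (Fin n) ℝ)
    (y : Fin N → ℝ) (lam : ℝ) (x : Fin n → ℝ) : ℝ :=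
  (1 / 2) * ∑ i, (y i - A.mulVec x i) ^ 2 + lam * ∑ j, |x j|

/-- If `0 < λ < λ_max := max_j |aⱼᵀ y|`, then every minimizer of the LASSO
objective `½‖y − A x‖₂² + λ‖x‖₁` is nonzero. -/
theorem sls_stmt4 (N n : ℕ) [NeZero n] (A : Matrix (Fin N) (Fin n) ℝ)
    (y : Fin N → ℝ) (lam : ℝ) (hlam : 0 < lam)
    (hmax : lam < Finset.univ.sup' Finset.univ_nonempty
        fun j : Fin n => |∑ i, A i j * y i|) :
    ∀ xhat : Fin n → ℝ,
      (∀ x : Fin n → ℝ, lassoObj A y lam xhat ≤ lassoObj A y lam x) →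
      xhat ≠ 0 := by
  intro xhat hmin heq
  subst heq
  obtain ⟨j, -, hj⟩ := (Finset.lt_sup'_iff _).mp hmax
  set c : ℝ := ∑ i, A i j * y i with hcdef
  set s : ℝ := if 0 < c then 1 else -1 with hsdef
  have hsc : s * c = |c| := by
    by_cases h : 0 < c
    · simp [hsdef, h, abs_of_pos h]
    · have hc0 : c ≠ 0 := by
        intro h0
        rw [h0, abs_zero] at hj; linarith
      have hneg : c < 0 := lt_of_le_of_ne (not_lt.mp h) hc0
      simp [hsdef, h, abs_of_neg hneg]
  have hs2 : s * s = 1 := by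
    by_cases h : 0 < c <;> simp [hsdef, h]
  set C : ℝ := ∑ i, (A i j) ^ 2 with hCdef
  have hC : 0 ≤ C := Finset.sum_nonneg fun i _ => sq_nonneg _
  set t : ℝ := (|c| - lam) / (C + 1) with htdef
  have ht : 0 < t := div_pos (by linarith) (by linarith)
  have htC : t * (C + 1) = |c| - lam := by
    rw [htdef, div_mul_cancel₀ _ (ne_of_gt (by linarith) : C + 1 ≠ 0)]
  set x : Fin n → ℝ := fun k => if k = j then t * s else 0 with hxdef
  have hmv : ∀ i, A.mulVec x i = A i j * (t * s) := by
    intro i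
    simp [Matrix.mulVec, dotProduct, hxdef, mul_ite, mul_zero]
  have habs : ∑ k, |x k| = t := by
    have : ∀ k, |x k| = if k = j then t else 0 := by
      intro k
      by_cases h : k = j
      · simp [hxdef, h, abs_mul, abs_of_pos ht]
        by_cases h2 : 0 < c <;> simp [hsdef, h2]
      · simp [hxdef, h]
    rw [Finset.sum_congr rfl fun k _ => this k]
    simp
  have hexp : ∑ i, (y i - A.mulVec x i) ^ 2 =
      (∑ i, (y i) ^ 2) - 2 * (t * s) * c + (t * s) ^ 2 * C := by
    have h1 : ∀ i ∈ Finset.univ, (y i - A.mulVec x i) ^ 2 =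
        (y i) ^ 2 - 2 * (t * s) * (A i j * y i) + (t * s) ^ 2 * (A i j) ^ 2 := by
      intro i _
      rw [hmv i]; ring
    rw [Finset.sum_congr rfl h1]
    rw [Finset.sum_add_distrib, Finset.sum_sub_distrib, ← Finset.mul_sum, ← Finset.mul_sum]
  have h0 : lassoObj A y lam (0 : Fin n → ℝ) = (1 / 2) * ∑ i, (y i) ^ 2 := by
    simp [lassoObj, Matrix.mulVec, dotProduct]
  have hx : lassoObj A y lam x < lassoObj A y lam 0 := by
    rw [h0]
    unfold lassoObj
    rw [hexp, habs]
    have hts : (t * s) ^ 2 = t ^ 2 := by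
      have : (t * s) ^ 2 = t ^ 2 * (s * s) := by ring
      rw [this, hs2, mul_one]
    have h2 : 2 * (t * s) * c = 2 * t * |c| := by
      rw [← hsc]; ring
    rw [hts, h2]
    nlinarith [sq_nonneg t, mul_pos ht (show (0:ℝ) < |c| - lam by linarith)]
  exact absurd (hmin x) (not_le.mpr hx)
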